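/- Every rational number r has a unique continued fraction expansion r = [e_1, e_2, ..., e_n] with each e_i = ±1, satisfying the 1-regularity condition: e_{n-1}e_n > 0, and whenever e_i e_{i+1} < 0 then e_{i+1} e_{i+2} > 0 (no two consecutive sign changes). -/

import Mathlib

/-- Evaluation of a finite continued fraction `[a₁, a₂, …, aₙ] = a₁ + 1/(a₂ + 1/(⋯ + 1/aₙ))`. -/
def cf : List ℤ → ℚ
  | [] => 0
  | a :: l => a + (cf l)⁻¹

/-- A continued fraction `[a₁, …, aₙ]` is 1-regular: all entries are nonzero,
`a_{n-1} aₙ > 0`, and there are no two consecutive sign changes. -/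
def OneRegular (l : List ℤ) : Prop :=
  (∀ a ∈ l, a ≠ 0) ∧
  (2 ≤ l.length → 0 < l[l.length - 2]! * l[l.length - 1]!) ∧
  (∀ i, i + 2 < l.length → l[i]! * l[i + 1]! < 0 → 0 < l[i + 1]! * l[i + 2]!)

@[simp] lemma or_nil : OneRegular [] := by
  refine ⟨by simp, by simp, by simp⟩

lemma or_singleton (a : ℤ) : OneRegular [a] ↔ a ≠ 0 := by
  constructor
  · rintro ⟨h1, -, -⟩; exact h1 a (by simp)
  · intro h; exact ⟨by simpa using h, by simp, by simp⟩

lemma or_cons_cons (a b : ℤ) (t : List ℤ) :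
    OneRegular (a :: b :: t) ↔
      a ≠ 0 ∧ OneRegular (b :: t) ∧
        (0 < a * b ∨ ∃ c t', t = c :: t' ∧ 0 < b * c) := by
  constructor
  · rintro ⟨h1, h2, h3⟩
    have ha : a ≠ 0 := h1 a (by simp)
    have hb : b ≠ 0 := h1 b (by simp)
    refine ⟨ha, ⟨fun x hx => h1 x (by simp [hx]), ?_, ?_⟩, ?_⟩
    · -- last-two condition for b :: t
      intro hlen
      have ht : 1 ≤ t.length := by
        cases t with
        | nil => simp at hlen
        | cons c t' => simp
      have h2' := h2 (by simp only [List.length_cons]; omega)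
      have e1 : (a :: b :: t).length - 2 = (t.length - 1) + 1 := by
        simp only [List.length_cons]; omega
      have e2 : (a :: b :: t).length - 1 = t.length + 1 := by
        simp only [List.length_cons]; omega
      rw [e1, e2, List.getElem!_cons_succ, List.getElem!_cons_succ] at h2'
      have e3 : (b :: t).length - 2 = t.length - 1 := by
        simp only [List.length_cons]; omega
      have e4 : (b :: t).length - 1 = t.length := by
        simp only [List.length_cons]; omega
      rw [e3, e4]
      exact h2'
    · intro i hi
      have := h3 (i + 1) (by simp only [List.length_cons] at hi ⊢; omega)
      simp only [List.getElem!_cons_succ] at this ⊢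
      exact this
    · rcases lt_or_gt_of_ne (mul_ne_zero ha hb) with hab | hab
      · right
        cases t with
        | nil =>
          exfalso
          have := h2 (by simp)
          simp only [List.length_cons, List.length_nil] at this
          rw [show (0:ℕ)+1+1-2 = 0 by rfl, show (0:ℕ)+1+1-1 = 0+1 by rfl,
            List.getElem!_cons_zero, List.getElem!_cons_succ,
            List.getElem!_cons_zero] at this
          omega
        | cons c t' =>
          refine ⟨c, t', rfl, ?_⟩
          have := h3 0 (by simp)
          rw [show (2:ℕ) = 1 + 1 by rfl, show (1:ℕ) = 0 + 1 by rfl] at this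
          simp only [List.getElem!_cons_succ, List.getElem!_cons_zero] at this
          exact this hab
      · left; exact hab
  · rintro ⟨ha, ⟨h1, h2, h3⟩, hd⟩
    have hb : b ≠ 0 := h1 b (by simp)
    refine ⟨?_, ?_, ?_⟩
    · intro x hx
      simp only [List.mem_cons] at hx
      rcases hx with rfl | hx
      · exact ha
      · exact h1 x (by simpa using hx)
    · intro _
      cases t with
      | nil =>
        simp only [List.length_cons, List.length_nil]
        rw [show (0:ℕ)+1+1-2 = 0 by rfl, show (0:ℕ)+1+1-1 = 0+1 by rfl]
        rw [List.getElem!_cons_zero, List.getElem!_cons_succ, List.getElem!_cons_zero]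
        rcases hd with hab | ⟨c, t', hct, _⟩
        · exact hab
        · simp at hct
      | cons c t' =>
        have h2' := h2 (by simp)
        have e1 : (a :: b :: c :: t').length - 2 = ((c :: t').length - 1) + 1 := by
          simp only [List.length_cons]; omega
        have e2 : (a :: b :: c :: t').length - 1 = (c :: t').length + 1 := by
          simp only [List.length_cons]; omega
        rw [e1, e2, List.getElem!_cons_succ, List.getElem!_cons_succ]
        have e3 : (b :: c :: t').length - 2 = (c :: t').length - 1 := by
          simp only [List.length_cons]; omega
        have e4 : (b :: c :: t').length - 1 = (c :: t').length := by
          simp only [List.length_cons]; omega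
        rw [e3, e4] at h2'
        exact h2'
    · intro i hi
      cases i with
      | zero =>
        rw [show (2:ℕ) = 1 + 1 by rfl, show (1:ℕ) = 0 + 1 by rfl]
        simp only [List.getElem!_cons_succ, List.getElem!_cons_zero]
        intro hlt
        rcases hd with hab | ⟨c, t', hct, hbc⟩
        · exact absurd hlt (not_lt.2 hab.le)
        · subst hct
          simpa [List.getElem!_cons_zero] using hbc
      | succ j =>
        have := h3 j (by simp only [List.length_cons] at hi ⊢; omega)
        simp only [List.getElem!_cons_succ] at this ⊢
        exact this

lemma or_tail {a : ℤ} {t : List ℤ} (h : OneRegular (a :: t)) : OneRegular t := by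
  cases t with
  | nil => simp
  | cons b t' => exact ((or_cons_cons a b t').1 h).2.1

lemma cf_nil : cf [] = 0 := rfl
lemma cf_cons (a : ℤ) (l : List ℤ) : cf (a :: l) = a + (cf l)⁻¹ := rfl

lemma cf_map_neg (l : List ℤ) : cf (l.map (fun a => -a)) = -cf l := by
  induction l with
  | nil => simp [cf]
  | cons a t ih =>
    simp only [List.map_cons, cf_cons, ih, inv_neg]
    push_cast; ring

lemma or_map_neg : ∀ l : List ℤ, OneRegular l → OneRegular (l.map (fun a => -a)) := by
  intro l
  induction l with
  | nil => intro _; simpa using or_nil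
  | cons a t ih =>
    cases t with
    | nil =>
      intro h
      simp only [List.map_cons, List.map_nil]
      rw [or_singleton] at h ⊢
      simpa using h
    | cons b t' =>
      intro h
      rw [or_cons_cons] at h
      obtain ⟨ha, hbt, hd⟩ := h
      simp only [List.map_cons]
      rw [or_cons_cons]
      refine ⟨by simpa using ha, by simpa using ih hbt, ?_⟩
      rcases hd with hab | ⟨c, t'', hct, hbc⟩
      · left; nlinarith
      · right
        refine ⟨-c, t''.map (fun a => -a), by simp [hct], by nlinarith⟩

lemma key : ∀ n : ℕ, ∀ l : List ℤ, l.length ≤ n → (∀ e ∈ l, e = 1 ∨ e = -1) →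
    OneRegular l →
    (∀ t, l = 1 :: t → 0 < cf l) ∧ (∀ t, l = 1 :: 1 :: t → 1 < cf l) := by
  intro n
  induction n with
  | zero =>
    intro l hl _ _
    have : l = [] := List.eq_nil_of_length_eq_zero (Nat.le_zero.1 hl)
    subst this
    exact ⟨fun t h => by simp at h, fun t h => by simp at h⟩
  | succ n ih =>
    intro l hl hpm hreg
    constructor
    · rintro t rfl
      cases t with
      | nil => norm_num [cf_cons, cf_nil]
      | cons e t' =>
        rcases hpm e (by simp) with rfl | rfl
        · have h1 : 0 < cf ((1:ℤ) :: t') :=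
            (ih ((1:ℤ) :: t')
              (by simp only [List.length_cons] at hl ⊢; omega)
              (fun x hx => hpm x (by simp [hx])) (or_tail hreg)).1 t' rfl
          rw [cf_cons]
          positivity
        · have hd := ((or_cons_cons 1 (-1) t').1 hreg).2.2
          rcases hd with hh | ⟨c, t'', rfl, hbc⟩
          · norm_num at hh
          · have hc : c = -1 := by
              rcases hpm c (by simp) with rfl | rfl
              · norm_num at hbc
              · rfl
            subst hc
            have h2 : 1 < cf ((((-1:ℤ) :: -1 :: t'').map (fun a => -a))) := by
              refine (ih (((-1:ℤ) :: -1 :: t'').map (fun a => -a))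
                (by simp only [List.length_map, List.length_cons] at hl ⊢; omega)
                ?_ (or_map_neg _ (or_tail hreg))).2 (t''.map (fun a => -a))
                (by simp)
              intro x hx
              simp only [List.mem_map] at hx
              obtain ⟨y, hy, rfl⟩ := hx
              rcases hpm y (by simp [hy]) with rfl | rfl
              · right; rfl
              · left; norm_num
            rw [cf_map_neg] at h2
            set x := cf ((-1:ℤ) :: -1 :: t'') with hx
            have h3 : x < -1 := by linarith
            have hxne : x ≠ 0 := by intro h; rw [h] at h3; norm_num at h3
            have h4 : (-1 : ℚ) < x⁻¹ := by
              nlinarith [mul_inv_cancel₀ hxne]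
            rw [cf_cons]
            push_cast
            linarith
    · rintro t rfl
      have h1 : 0 < cf ((1:ℤ) :: t) :=
        (ih ((1:ℤ) :: t)
          (by simp only [List.length_cons] at hl ⊢; omega)
          (fun x hx => hpm x (by simp [hx])) (or_tail hreg)).1 t rfl
      rw [cf_cons]
      have : 0 < (cf ((1:ℤ) :: t))⁻¹ := by positivity
      push_cast
      linarith

lemma cf_pos_of_head_one {t : List ℤ} (hpm : ∀ e ∈ (1:ℤ) :: t, e = 1 ∨ e = -1)
    (hreg : OneRegular ((1:ℤ) :: t)) : 0 < cf ((1:ℤ) :: t) :=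
  (key ((1:ℤ)::t).length _ le_rfl hpm hreg).1 t rfl

lemma cf_neg_of_head_negone {t : List ℤ} (hpm : ∀ e ∈ (-1:ℤ) :: t, e = 1 ∨ e = -1)
    (hreg : OneRegular ((-1:ℤ) :: t)) : cf ((-1:ℤ) :: t) < 0 := by
  have h := cf_pos_of_head_one (t := t.map (fun a => -a)) ?_ ?_
  · have := cf_map_neg ((-1:ℤ) :: t)
    simp only [List.map_cons, neg_neg] at this
    rw [this] at h
    linarith
  · intro e he
    simp only [List.mem_cons, List.mem_map] at he
    rcases he with rfl | ⟨y, hy, rfl⟩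
    · left; rfl
    · rcases hpm y (by simp [hy]) with rfl | rfl
      · right; rfl
      · left; norm_num
  · have := or_map_neg _ hreg
    simpa using this

lemma cf_ne_zero {l : List ℤ} (hpm : ∀ e ∈ l, e = 1 ∨ e = -1)
    (hreg : OneRegular l) (hne : l ≠ []) : cf l ≠ 0 := by
  cases l with
  | nil => exact absurd rfl hne
  | cons a t =>
    rcases hpm a (by simp) with rfl | rfl
    · exact (cf_pos_of_head_one hpm hreg).ne'
    · exact (cf_neg_of_head_negone hpm hreg).ne

lemma uniq : ∀ n : ℕ, ∀ l₁ l₂ : List ℤ, l₁.length + l₂.length ≤ n →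
    (∀ e ∈ l₁, e = 1 ∨ e = -1) → OneRegular l₁ →
    (∀ e ∈ l₂, e = 1 ∨ e = -1) → OneRegular l₂ →
    cf l₁ = cf l₂ → l₁ = l₂ := by
  intro n
  induction n with
  | zero =>
    intro l₁ l₂ h _ _ _ _ _
    have h1 : l₁ = [] := List.eq_nil_of_length_eq_zero (by omega)
    have h2 : l₂ = [] := List.eq_nil_of_length_eq_zero (by omega)
    rw [h1, h2]
  | succ n ih =>
    intro l₁ l₂ hlen hpm1 hreg1 hpm2 hreg2 hcf
    cases l₁ with
    | nil =>
      cases l₂ with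
      | nil => rfl
      | cons b t₂ =>
        exact absurd hcf.symm (cf_ne_zero hpm2 hreg2 (by simp))
    | cons a t₁ =>
      cases l₂ with
      | nil => exact absurd hcf (cf_ne_zero hpm1 hreg1 (by simp))
      | cons b t₂ =>
        have hab : a = b := by
          rcases hpm1 a (by simp) with rfl | rfl <;>
            rcases hpm2 b (by simp) with rfl | rfl
          · rfl
          · have h1 := cf_pos_of_head_one hpm1 hreg1
            have h2 := cf_neg_of_head_negone hpm2 hreg2
            rw [hcf] at h1; linarith
          · have h1 := cf_neg_of_head_negone hpm1 hreg1
            have h2 := cf_pos_of_head_one hpm2 hreg2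
            rw [hcf] at h1; linarith
          · rfl
        subst hab
        have htail : cf t₁ = cf t₂ := by
          rw [cf_cons, cf_cons] at hcf
          have : (cf t₁)⁻¹ = (cf t₂)⁻¹ := by linarith
          exact inv_injective this
        have := ih t₁ t₂ (by simp only [List.length_cons] at hlen; omega)
          (fun e he => hpm1 e (by simp [he])) (or_tail hreg1)
          (fun e he => hpm2 e (by simp [he])) (or_tail hreg2) htail
        rw [this]

def E : ℕ → ℕ → List ℤ
  | p, q =>
    if p = 0 ∨ q = 0 then []
    else if p = q then [1]
    else if q < p then 1 :: E q (p - q)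
    else 1 :: -1 :: (E (q - p) p).map (fun a => -a)
termination_by p q => p + q
decreasing_by
  · omega
  · omega

lemma E_spec : ∀ n p q : ℕ, p + q ≤ n → 1 ≤ p → 1 ≤ q →
    (∀ e ∈ E p q, e = 1 ∨ e = -1) ∧ OneRegular (E p q) ∧
      cf (E p q) = (p : ℚ) / q ∧ ∃ t, E p q = 1 :: t := by
  intro n
  induction n with
  | zero => intro p q h hp hq; omega
  | succ n ih =>
    intro p q hle hp hq
    have hp0 : (0:ℚ) < p := by exact_mod_cast hp
    have hq0 : (0:ℚ) < q := by exact_mod_cast hq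
    rw [E]
    rw [if_neg (by omega)]
    by_cases hpq : p = q
    · rw [if_pos hpq]
      subst hpq
      refine ⟨by simp, (or_singleton 1).2 (by norm_num), ?_, [], rfl⟩
      rw [cf_cons, cf_nil]
      norm_num
      rw [div_self hp0.ne']
    · rw [if_neg hpq]
      by_cases hqp : q < p
      · rw [if_pos hqp]
        obtain ⟨hpm', hreg', hcf', t, ht⟩ :=
          ih q (p - q) (by omega) hq (by omega)
        have hcast : ((p - q : ℕ) : ℚ) = (p : ℚ) - q := by
          push_cast [Nat.cast_sub hqp.le]; ring
        refine ⟨?_, ?_, ?_, E q (p - q), rfl⟩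
        · intro e he
          simp only [List.mem_cons] at he
          rcases he with rfl | he
          · left; rfl
          · exact hpm' e he
        · rw [ht, or_cons_cons]
          exact ⟨by norm_num, ht ▸ hreg', Or.inl (by norm_num)⟩
        · rw [cf_cons, hcf', hcast]
          have hpq0 : (p : ℚ) - q ≠ 0 := by
            have : (q:ℚ) < p := by exact_mod_cast hqp
            linarith
          push_cast
          rw [inv_div]
          field_simp
          ring
      · rw [if_neg hqp]
        have hpq' : p < q := by omega
        obtain ⟨hpm', hreg', hcf', t, ht⟩ :=
          ih (q - p) p (by omega) (by omega) hp
        have hcast : ((q - p : ℕ) : ℚ) = (q : ℚ) - p := by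
          push_cast [Nat.cast_sub hpq'.le]; ring
        have hqp0 : (0:ℚ) < (q : ℚ) - p := by
          have : (p:ℚ) < q := by exact_mod_cast hpq'
          linarith
        refine ⟨?_, ?_, ?_, ?_⟩
        · intro e he
          simp only [List.mem_cons, List.mem_map] at he
          rcases he with rfl | rfl | ⟨y, hy, rfl⟩
          · left; rfl
          · right; rfl
          · rcases hpm' y hy with rfl | rfl
            · right; rfl
            · left; norm_num
        · have hM : OneRegular ((E (q - p) p).map (fun a => -a)) :=
            or_map_neg _ hreg'
          rw [ht] at hM ⊢
          simp only [List.map_cons] at hM ⊢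
          rw [or_cons_cons]
          refine ⟨by norm_num, ?_, Or.inr ⟨-1, _, rfl, by norm_num⟩⟩
          rw [or_cons_cons]
          exact ⟨by norm_num, hM, Or.inl (by norm_num)⟩
        · rw [cf_cons, cf_cons, cf_map_neg, hcf', hcast]
          have h1 : (-(((q:ℚ) - p) / p))⁻¹ = -((p:ℚ) / ((q:ℚ) - p)) := by
            rw [inv_neg, inv_div]
          push_cast
          rw [h1]
          have h2 : (-1 : ℚ) + -((p:ℚ) / ((q:ℚ) - p)) = -((q:ℚ) / ((q:ℚ) - p)) := by
            field_simp
            ring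
          rw [h2]
          rw [inv_neg, inv_div]
          field_simp
          ring
        · exact ⟨_, rfl⟩


theorem unique_one_regular_pm_one_expansion (r : ℚ) :
    ∃! l : List ℤ, (∀ e ∈ l, e = 1 ∨ e = -1) ∧ OneRegular l ∧ cf l = r := by
  have main : ∃ l : List ℤ, (∀ e ∈ l, e = 1 ∨ e = -1) ∧ OneRegular l ∧ cf l = r := by
    rcases lt_trichotomy r 0 with hr | hr | hr
    · have hn : r.num < 0 := Rat.num_neg.2 hr
      have hp : 1 ≤ (-r.num).toNat := by omega
      obtain ⟨hpm, hreg, hcf, -⟩ :=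
        E_spec ((-r.num).toNat + r.den) (-r.num).toNat r.den le_rfl hp r.pos
      refine ⟨(E (-r.num).toNat r.den).map (fun a => -a), ?_, or_map_neg _ hreg, ?_⟩
      · intro e he
        simp only [List.mem_map] at he
        obtain ⟨y, hy, rfl⟩ := he
        rcases hpm y hy with rfl | rfl
        · right; rfl
        · left; norm_num
      · rw [cf_map_neg, hcf]
        have h1 : (((-r.num).toNat : ℤ) : ℚ) = -(r.num : ℚ) := by
          rw [Int.toNat_of_nonneg (by omega)]; push_cast; ring
        push_cast at h1 ⊢
        rw [h1]
        rw [neg_div, neg_neg]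
        exact r.num_div_den
    · exact ⟨[], by simp, or_nil, by simp [cf_nil, hr]⟩
    · have hn : 0 < r.num := Rat.num_pos.2 hr
      have hp : 1 ≤ r.num.toNat := by omega
      obtain ⟨hpm, hreg, hcf, -⟩ :=
        E_spec (r.num.toNat + r.den) r.num.toNat r.den le_rfl hp r.pos
      refine ⟨E r.num.toNat r.den, hpm, hreg, ?_⟩
      rw [hcf]
      have h1 : ((r.num.toNat : ℤ) : ℚ) = (r.num : ℚ) := by
        rw [Int.toNat_of_nonneg (by omega)]
      push_cast at h1 ⊢
      rw [h1]
      exact r.num_div_den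
  obtain ⟨l, hl⟩ := main
  refine ⟨l, hl, ?_⟩
  rintro y ⟨hpm', hreg', hcf'⟩
  exact uniq (y.length + l.length) y l le_rfl hpm' hreg' hl.1 hl.2.1
    (hcf'.trans hl.2.2.symm)
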